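/- For all s in [0, π/2], the function q(s) = 2cos³(s)sin(s)s² − cos³(s)sin(s) + cos(s)sin(s)s² − 4cos²(s)sin²(s)s − s³ + sin(s)cos(s) + s·sin²(s) satisfies q(s) ≤ 0. -/

import Mathlib

open Real

private lemma deriv_nonneg_imp {f f' : ℝ → ℝ} (hd : ∀ t, HasDerivAt f (f' t) t)
    (h0 : f 0 = 0) (h' : ∀ t, 0 ≤ t → 0 ≤ f' t) {x : ℝ} (hx : 0 ≤ x) : 0 ≤ f x := by
  have hm : MonotoneOn f (Set.Ici (0:ℝ)) := by
    refine monotoneOn_of_deriv_nonneg (convex_Ici 0) ?_ ?_ ?_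
    · exact fun t _ => (hd t).continuousAt.continuousWithinAt
    · exact fun t _ => (hd t).differentiableAt.differentiableWithinAt
    · intro t ht
      rw [interior_Ici] at ht
      rw [(hd t).deriv]
      exact h' t ht.le
  calc (0:ℝ) = f 0 := h0.symm
  _ ≤ f x := hm Set.self_mem_Ici hx hx

private lemma step3 {x : ℝ} (hx : 0 ≤ x) : x - x^3/6 ≤ Real.sin x := by
  have h : 0 ≤ Real.sin x - (x - x^3/6) := by
    refine deriv_nonneg_imp (f := fun y => Real.sin y - (y - y^3/6)) (f' := fun t => Real.cos t - (1 - t^2/2)) (fun t => ?_)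
      (by norm_num) (fun t ht => by nlinarith [Real.one_sub_sq_div_two_le_cos (x := t)]) hx
    have h1 := (Real.hasDerivAt_sin t).sub ((hasDerivAt_id' (𝕜 := ℝ) (x := t)).sub ((hasDerivAt_pow 3 t).div_const 6))
    exact h1.congr_deriv (by norm_num <;> ring)
  linarith

private lemma step4 {x : ℝ} (hx : 0 ≤ x) : Real.cos x ≤ 1 - x^2/2 + x^4/24 := by
  have h : 0 ≤ (fun y => 1 - y^2/2 + y^4/24 - Real.cos y) x := by
    refine deriv_nonneg_imp (f := fun y => 1 - y^2/2 + y^4/24 - Real.cos y) (f' := fun t => -(t - t^3/6) + Real.sin t) (fun t => ?_)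
      (by norm_num) (fun t ht => by nlinarith [step3 ht]) hx
    have h1 := ((((hasDerivAt_const t (1:ℝ)).sub ((hasDerivAt_pow 2 t).div_const 2)).add
      ((hasDerivAt_pow 4 t).div_const 24)).sub (Real.hasDerivAt_cos t))
    exact h1.congr_deriv (by norm_num <;> ring)
  simp only at h
  linarith

private lemma step5 {x : ℝ} (hx : 0 ≤ x) : Real.sin x ≤ x - x^3/6 + x^5/120 := by
  have h : 0 ≤ (fun y => y - y^3/6 + y^5/120 - Real.sin y) x := by
    refine deriv_nonneg_imp (f := fun y => y - y^3/6 + y^5/120 - Real.sin y) (f' := fun t => (1 - t^2/2 + t^4/24) - Real.cos t) (fun t => ?_)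
      (by norm_num) (fun t ht => by nlinarith [step4 ht]) hx
    have h1 := ((((hasDerivAt_id' (𝕜 := ℝ) (x := t)).sub ((hasDerivAt_pow 3 t).div_const 6)).add
      ((hasDerivAt_pow 5 t).div_const 120)).sub (Real.hasDerivAt_sin t))
    exact h1.congr_deriv (by norm_num <;> ring)
  simp only at h
  linarith

private lemma step6 {x : ℝ} (hx : 0 ≤ x) : 1 - x^2/2 + x^4/24 - x^6/720 ≤ Real.cos x := by
  have h : 0 ≤ (fun y => Real.cos y - (1 - y^2/2 + y^4/24 - y^6/720)) x := by
    refine deriv_nonneg_imp (f := fun y => Real.cos y - (1 - y^2/2 + y^4/24 - y^6/720)) (f' := fun t => (t - t^3/6 + t^5/120) - Real.sin t) (fun t => ?_)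
      (by norm_num) (fun t ht => by nlinarith [step5 ht]) hx
    have h1 := (Real.hasDerivAt_cos t).sub ((((hasDerivAt_const t (1:ℝ)).sub
      ((hasDerivAt_pow 2 t).div_const 2)).add ((hasDerivAt_pow 4 t).div_const 24)).sub
      ((hasDerivAt_pow 6 t).div_const 720))
    exact h1.congr_deriv (by norm_num <;> ring)
  simp only at h
  linarith

private lemma step7 {x : ℝ} (hx : 0 ≤ x) : x - x^3/6 + x^5/120 - x^7/5040 ≤ Real.sin x := by
  have h : 0 ≤ (fun y => Real.sin y - (y - y^3/6 + y^5/120 - y^7/5040)) x := by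
    refine deriv_nonneg_imp (f := fun y => Real.sin y - (y - y^3/6 + y^5/120 - y^7/5040)) (f' := fun t => Real.cos t - (1 - t^2/2 + t^4/24 - t^6/720)) (fun t => ?_)
      (by norm_num) (fun t ht => by nlinarith [step6 ht]) hx
    have h1 := (Real.hasDerivAt_sin t).sub ((((hasDerivAt_id' (𝕜 := ℝ) (x := t)).sub
      ((hasDerivAt_pow 3 t).div_const 6)).add ((hasDerivAt_pow 5 t).div_const 120)).sub
      ((hasDerivAt_pow 7 t).div_const 5040))
    exact h1.congr_deriv (by norm_num <;> ring)
  simp only at h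
  linarith

private lemma step8 {x : ℝ} (hx : 0 ≤ x) :
    Real.cos x ≤ 1 - x^2/2 + x^4/24 - x^6/720 + x^8/40320 := by
  have h : 0 ≤ (fun y => 1 - y^2/2 + y^4/24 - y^6/720 + y^8/40320 - Real.cos y) x := by
    refine deriv_nonneg_imp
      (f := fun y => 1 - y^2/2 + y^4/24 - y^6/720 + y^8/40320 - Real.cos y) (f' := fun t => -(t - t^3/6 + t^5/120 - t^7/5040) + Real.sin t) (fun t => ?_)
      (by norm_num) (fun t ht => by nlinarith [step7 ht]) hx
    have h1 := (((((hasDerivAt_const t (1:ℝ)).sub ((hasDerivAt_pow 2 t).div_const 2)).add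
      ((hasDerivAt_pow 4 t).div_const 24)).sub ((hasDerivAt_pow 6 t).div_const 720)).add
      ((hasDerivAt_pow 8 t).div_const 40320)).sub (Real.hasDerivAt_cos t)
    exact h1.congr_deriv (by norm_num <;> ring)
  simp only at h
  linarith

private lemma step9 {x : ℝ} (hx : 0 ≤ x) :
    Real.sin x ≤ x - x^3/6 + x^5/120 - x^7/5040 + x^9/362880 := by
  have h : 0 ≤ (fun y => y - y^3/6 + y^5/120 - y^7/5040 + y^9/362880 - Real.sin y) x := by
    refine deriv_nonneg_imp
      (f := fun y => y - y^3/6 + y^5/120 - y^7/5040 + y^9/362880 - Real.sin y) (f' := fun t => (1 - t^2/2 + t^4/24 - t^6/720 + t^8/40320) - Real.cos t) (fun t => ?_)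
      (by norm_num) (fun t ht => by nlinarith [step8 ht]) hx
    have h1 := (((((hasDerivAt_id' (𝕜 := ℝ) (x := t)).sub ((hasDerivAt_pow 3 t).div_const 6)).add
      ((hasDerivAt_pow 5 t).div_const 120)).sub ((hasDerivAt_pow 7 t).div_const 5040)).add
      ((hasDerivAt_pow 9 t).div_const 362880)).sub (Real.hasDerivAt_sin t)
    exact h1.congr_deriv (by norm_num <;> ring)
  simp only at h
  linarith

private lemma step10 {x : ℝ} (hx : 0 ≤ x) :
    1 - x^2/2 + x^4/24 - x^6/720 + x^8/40320 - x^10/3628800 ≤ Real.cos x := by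
  have h : 0 ≤ (fun y =>
      Real.cos y - (1 - y^2/2 + y^4/24 - y^6/720 + y^8/40320 - y^10/3628800)) x := by
    refine deriv_nonneg_imp
      (f := fun y => Real.cos y - (1 - y^2/2 + y^4/24 - y^6/720 + y^8/40320 - y^10/3628800)) (f' := fun t => (t - t^3/6 + t^5/120 - t^7/5040 + t^9/362880) - Real.sin t) (fun t => ?_)
      (by norm_num) (fun t ht => by nlinarith [step9 ht]) hx
    have h1 := (Real.hasDerivAt_cos t).sub ((((((hasDerivAt_const t (1:ℝ)).sub
      ((hasDerivAt_pow 2 t).div_const 2)).add ((hasDerivAt_pow 4 t).div_const 24)).sub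
      ((hasDerivAt_pow 6 t).div_const 720)).add ((hasDerivAt_pow 8 t).div_const 40320)).sub
      ((hasDerivAt_pow 10 t).div_const 3628800))
    exact h1.congr_deriv (by norm_num <;> ring)
  simp only at h
  linarith

set_option maxHeartbeats 4000000 in
theorem q_nonpos (s : ℝ) (hs : s ∈ Set.Icc 0 (π / 2)) :
    2 * Real.cos s ^ 3 * Real.sin s * s ^ 2 - Real.cos s ^ 3 * Real.sin s
      + Real.cos s * Real.sin s * s ^ 2 - 4 * Real.cos s ^ 2 * Real.sin s ^ 2 * s
      - s ^ 3 + Real.sin s * Real.cos s + s * Real.sin s ^ 2 ≤ 0 := by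
  obtain ⟨hs0, hsp⟩ := hs
  have hpi : π < 3.141593 := Real.pi_lt_d6
  have hv0 : (0:ℝ) ≤ s^2 := sq_nonneg s
  have hvB : s^2 ≤ 617/250 := by nlinarith
  have hB : (0:ℝ) ≤ 617/250 - s^2 := by linarith
  have hσ0 : 0 ≤ Real.sin s := Real.sin_nonneg_of_nonneg_of_le_pi hs0 (by linarith [Real.pi_pos])
  have hc0 : 0 ≤ Real.cos s := Real.cos_nonneg_of_mem_Icc ⟨by linarith [Real.pi_pos], hsp⟩
  have hpy : Real.sin s ^ 2 + Real.cos s ^ 2 = 1 := Real.sin_sq_add_cos_sq s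
  have h2s : (0:ℝ) ≤ 2*s := by linarith
  have hcos8 := step8 h2s
  have hcos10 := step10 h2s
  have hsin9 := step9 h2s
  rw [Real.cos_two_mul] at hcos8 hcos10
  rw [Real.sin_two_mul] at hsin9
  -- bounds on sin^2 and 2 sin cos
  have hl : (s^2 - s^4/3 + 2*s^6/45 - s^8/315) ≤ Real.sin s ^ 2 := by linarith [hcos8, hpy]
  have hu : Real.sin s ^ 2 ≤ (s^2 - s^4/3 + 2*s^6/45 - s^8/315 + 2*s^10/14175) := by linarith [hcos10, hpy]
  have hshi : 2*Real.sin s*Real.cos s ≤ (2*s - 4*s^3/3 + 4*s^5/15 - 8*s^7/315 + 4*s^9/2835) := by linarith [hsin9]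
  have hσ6 : Real.sin s ^ 6 ≤ (s^2 - s^4/3 + 2*s^6/45 - s^8/315 + 2*s^10/14175)^3 := by
    have h := pow_le_pow_left₀ (sq_nonneg (Real.sin s)) hu 3
    calc Real.sin s ^ 6 = (Real.sin s ^ 2)^3 := by ring
    _ ≤ _ := h
  have hshi0 : (0:ℝ) ≤ (2*s - 4*s^3/3 + 4*s^5/15 - 8*s^7/315 + 4*s^9/2835) :=
    le_trans (by positivity) hshi
  have hσ1 : Real.sin s ^ 2 ≤ 1 := by nlinarith [hpy, sq_nonneg (Real.cos s)]
  have hl1 : (s^2 - s^4/3 + 2*s^6/45 - s^8/315) ≤ 1 := hl.trans hσ1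
  have hc2 : Real.cos s ^ 2 ≤ 1 - (s^2 - s^4/3 + 2*s^6/45 - s^8/315) := by linarith [hl, hpy]
  -- Q lower bound
  have hmm : Real.cos s ^ 2 * (s*(2*Real.sin s*Real.cos s)) ≤ (1 - (s^2 - s^4/3 + 2*s^6/45 - s^8/315))*(s*(2*s - 4*s^3/3 + 4*s^5/15 - 8*s^7/315 + 4*s^9/2835)) :=
    mul_le_mul hc2 (mul_le_mul_of_nonneg_left hshi hs0) (by positivity) (by linarith)
  have hQ : (s^2 + (s^2 - s^4/3 + 2*s^6/45 - s^8/315) - 2*(s^2 - s^4/3 + 2*s^6/45 - s^8/315 + 2*s^10/14175)^3 - (1 - (s^2 - s^4/3 + 2*s^6/45 - s^8/315))*(s*(2*s - 4*s^3/3 + 4*s^5/15 - 8*s^7/315 + 4*s^9/2835))) ≤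
      s^2 + Real.sin s ^ 2 - 2*Real.sin s ^ 6 - 2*Real.cos s ^ 3*Real.sin s*s := by
    linarith [hmm, hl, hσ6]
  -- A lower bound
  have hA : (2*s^3/3 - 2*s^5/15 + 4*s^7/315 - 2*s^9/2835) ≤ s - Real.cos s * Real.sin s := by linarith [hshi]
  have ha0 : (0:ℝ) ≤ (2*s^3/3 - 2*s^5/15 + 4*s^7/315 - 2*s^9/2835) := by
    nlinarith [pow_nonneg hs0 3, pow_nonneg hs0 5, pow_nonneg hs0 7,
      mul_nonneg (pow_nonneg hs0 3) hB, mul_nonneg (pow_nonneg hs0 7) hB,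
      mul_nonneg (mul_nonneg (pow_nonneg hs0 5) hB) hB]
  -- Bernstein certificate : 0 ≤ L
  have h4 : (0:ℝ) ≤ s^4 := pow_nonneg hs0 4
  have h9 : (0:ℝ) ≤ s^9 := pow_nonneg hs0 9
  have hL0 : (0:ℝ) ≤ (s^2 + (s^2 - s^4/3 + 2*s^6/45 - s^8/315) - 2*(s^2 - s^4/3 + 2*s^6/45 - s^8/315 + 2*s^10/14175)^3 - (1 - (s^2 - s^4/3 + 2*s^6/45 - s^8/315))*(s*(2*s - 4*s^3/3 + 4*s^5/15 - 8*s^7/315 + 4*s^9/2835))) := by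
    linarith [mul_nonneg (mul_nonneg h4 (pow_nonneg hv0 0)) (pow_nonneg hB 13), mul_nonneg (mul_nonneg h4 (pow_nonneg hv0 1)) (pow_nonneg hB 12), mul_nonneg (mul_nonneg h4 (pow_nonneg hv0 2)) (pow_nonneg hB 11), mul_nonneg (mul_nonneg h4 (pow_nonneg hv0 3)) (pow_nonneg hB 10), mul_nonneg (mul_nonneg h4 (pow_nonneg hv0 4)) (pow_nonneg hB 9), mul_nonneg (mul_nonneg h4 (pow_nonneg hv0 5)) (pow_nonneg hB 8), mul_nonneg (mul_nonneg h4 (pow_nonneg hv0 6)) (pow_nonneg hB 7), mul_nonneg (mul_nonneg h4 (pow_nonneg hv0 7)) (pow_nonneg hB 6), mul_nonneg (mul_nonneg h4 (pow_nonneg hv0 8)) (pow_nonneg hB 5), mul_nonneg (mul_nonneg h4 (pow_nonneg hv0 9)) (pow_nonneg hB 4), mul_nonneg (mul_nonneg h4 (pow_nonneg hv0 10)) (pow_nonneg hB 3), mul_nonneg (mul_nonneg h4 (pow_nonneg hv0 11)) (pow_nonneg hB 2), mul_nonneg (mul_nonneg h4 (pow_nonneg hv0 12)) (pow_nonneg hB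 1), mul_nonneg (mul_nonneg h4 (pow_nonneg hv0 13)) (pow_nonneg hB 0)]
  -- Bernstein certificate : shi * u^3 ≤ a * L
  have hD : (2*s - 4*s^3/3 + 4*s^5/15 - 8*s^7/315 + 4*s^9/2835)*(s^2 - s^4/3 + 2*s^6/45 - s^8/315 + 2*s^10/14175)^3 ≤ (2*s^3/3 - 2*s^5/15 + 4*s^7/315 - 2*s^9/2835)*(s^2 + (s^2 - s^4/3 + 2*s^6/45 - s^8/315) - 2*(s^2 - s^4/3 + 2*s^6/45 - s^8/315 + 2*s^10/14175)^3 - (1 - (s^2 - s^4/3 + 2*s^6/45 - s^8/315))*(s*(2*s - 4*s^3/3 + 4*s^5/15 - 8*s^7/315 + 4*s^9/2835))) := by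
    linarith [mul_nonneg (mul_nonneg h9 (pow_nonneg hv0 0)) (pow_nonneg hB 11), mul_nonneg (mul_nonneg h9 (pow_nonneg hv0 1)) (pow_nonneg hB 10), mul_nonneg (mul_nonneg h9 (pow_nonneg hv0 2)) (pow_nonneg hB 9), mul_nonneg (mul_nonneg h9 (pow_nonneg hv0 3)) (pow_nonneg hB 8), mul_nonneg (mul_nonneg h9 (pow_nonneg hv0 4)) (pow_nonneg hB 7), mul_nonneg (mul_nonneg h9 (pow_nonneg hv0 5)) (pow_nonneg hB 6), mul_nonneg (mul_nonneg h9 (pow_nonneg hv0 6)) (pow_nonneg hB 5), mul_nonneg (mul_nonneg h9 (pow_nonneg hv0 7)) (pow_nonneg hB 4), mul_nonneg (mul_nonneg h9 (pow_nonneg hv0 8)) (pow_nonneg hB 3), mul_nonneg (mul_nonneg h9 (pow_nonneg hv0 9)) (pow_nonneg hB 2), mul_nonneg (mul_nonneg h9 (pow_nonneg hv0 10)) (pow_nonneg hB 1), mul_nonneg (mul_nonneg h9 (pow_nonneg hv0 11)) (pow_nonneg hB 0)]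
  have hprod : (2*s^3/3 - 2*s^5/15 + 4*s^7/315 - 2*s^9/2835)*(s^2 + (s^2 - s^4/3 + 2*s^6/45 - s^8/315) - 2*(s^2 - s^4/3 + 2*s^6/45 - s^8/315 + 2*s^10/14175)^3 - (1 - (s^2 - s^4/3 + 2*s^6/45 - s^8/315))*(s*(2*s - 4*s^3/3 + 4*s^5/15 - 8*s^7/315 + 4*s^9/2835))) ≤
      (s - Real.cos s * Real.sin s) *
        (s^2 + Real.sin s ^ 2 - 2*Real.sin s ^ 6 - 2*Real.cos s ^ 3*Real.sin s*s) :=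
    mul_le_mul hA hQ hL0 (le_trans ha0 hA)
  have hR : 2*Real.cos s*Real.sin s ^ 7 ≤ (2*s - 4*s^3/3 + 4*s^5/15 - 8*s^7/315 + 4*s^9/2835)*(s^2 - s^4/3 + 2*s^6/45 - s^8/315 + 2*s^10/14175)^3 := by
    have h := mul_le_mul hshi hσ6 (pow_nonneg hσ0 6) hshi0
    linarith [h]
  have hid : 2 * Real.cos s ^ 3 * Real.sin s * s ^ 2 - Real.cos s ^ 3 * Real.sin s
      + Real.cos s * Real.sin s * s ^ 2 - 4 * Real.cos s ^ 2 * Real.sin s ^ 2 * s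
      - s ^ 3 + Real.sin s * Real.cos s + s * Real.sin s ^ 2 =
      2*Real.cos s*Real.sin s ^ 7 - (s - Real.cos s * Real.sin s) *
        (s^2 + Real.sin s ^ 2 - 2*Real.sin s ^ 6 - 2*Real.cos s ^ 3*Real.sin s*s) := by
    linear_combination (2*s*Real.cos s ^2*Real.sin s ^2 - Real.cos s*Real.sin s
      - 2*s*Real.sin s ^2 - 2*s*Real.sin s ^4) * hpy
  rw [hid]
  linarith [hprod, hR, hD]
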